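/- arXiv:2509.21564 — 2 statements merged into one kernel-verified Lean document; each statement's English description precedes it below -/
import Mathlib

section
/- Let A be an abelian category and σ: S ↪ 1_A a preradical with cokernel σ*: 1_A ↠ S*. Then σ is a radical (i.e., the coproduct (σ:σ) equals σ) if and only if S*σ* = σ*S* : S* → S*S* is an isomorphism. -/
open CategoryTheory CategoryTheory.Limits

universe v u

variable {A : Type u} [Category.{v} A] [Abelian A]

/-- The coproduct `(σ:τ)` of preradicals: `Ker(1_A ⟶ S* ⟶ T*S*)`. -/
noncomputable def preradCoprod (σ τ : Subobject (𝟭 A)) : Subobject (𝟭 A) :=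
  kernelSubobject
    (cokernel.π σ.arrow ≫ Functor.whiskerLeft (cokernel σ.arrow) (cokernel.π τ.arrow) :
      𝟭 A ⟶ cokernel σ.arrow ⋙ cokernel τ.arrow)

section Aux

variable {C : Type*} [Category C] [Abelian C]

/-- For a mono, the kernel of its cokernel is itself (as subobject). -/
lemma aux_kernelSubobject_cokernel {X Y : C} (f : X ⟶ Y) [Mono f] :
    kernelSubobject (cokernel.π f) = Subobject.mk f := by
  have h := Abelian.monoIsKernelOfCokernel _ (cokernelIsCokernel f)
  let e := IsLimit.conePointUniqueUpToIso (kernelIsKernel (cokernel.π f)) h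
  have w : e.hom ≫ f = kernel.ι (cokernel.π f) :=
    IsLimit.conePointUniqueUpToIso_hom_comp _ _ WalkingParallelPair.zero
  exact Subobject.mk_eq_mk_of_comm _ _ e w

/-- If `p` is epi, `ker (p ≫ g) = ker p` iff `g` is mono. -/
lemma aux_kernel_comp_eq_iff_mono {X Y Z : C} (p : X ⟶ Y) [Epi p] (g : Y ⟶ Z) :
    kernelSubobject (p ≫ g) = kernelSubobject p ↔ Mono g := by
  constructor
  · intro h
    apply Abelian.mono_of_kernel_ι_eq_zero
    have hfst : Epi (pullback.fst (kernel.ι g) p) := inferInstance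
    have key : pullback.fst (kernel.ι g) p ≫ kernel.ι g = 0 := by
      have h1 : pullback.snd (kernel.ι g) p ≫ (p ≫ g) = 0 := by
        rw [← Category.assoc, ← pullback.condition, Category.assoc, kernel.condition,
          comp_zero]
      -- snd factors through kernel of (p ≫ g) = kernel of p, hence snd ≫ p = 0
      have h2 : pullback.snd (kernel.ι g) p ≫ p = 0 := by
        have := (kernelSubobject (p ≫ g)).factorThru_arrow _
          ((kernelSubobject_factors_iff _ _).2 h1)
        rw [← this, Category.assoc]
        have harr : (kernelSubobject (p ≫ g)).arrow ≫ p = 0 := by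
          rw [h]; exact kernelSubobject_arrow_comp p
        rw [harr, comp_zero]
      rw [pullback.condition, h2]
    rw [← cancel_epi (pullback.fst (kernel.ι g) p), key, comp_zero]
  · intro h
    exact kernelSubobject_comp_mono p g

end Aux

/-- A preradical `σ` is a radical iff `σ*S* : S* ⟶ S*S*` is an isomorphism. -/
theorem prerad_radical_iff_whiskerLeft_cokernel_isIso (σ : Subobject (𝟭 A)) :
    preradCoprod σ σ = σ ↔
      IsIso (Functor.whiskerLeft (cokernel σ.arrow) (cokernel.π σ.arrow)) := by
  have hepi : Epi (Functor.whiskerLeft (cokernel σ.arrow) (cokernel.π σ.arrow)) := by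
    have : ∀ X : A, Epi ((Functor.whiskerLeft (cokernel σ.arrow) (cokernel.π σ.arrow)).app X) :=
      fun X => inferInstanceAs (Epi ((cokernel.π σ.arrow).app ((cokernel σ.arrow).obj X)))
    exact NatTrans.epi_of_epi_app _
  have hσ : kernelSubobject (cokernel.π σ.arrow) = σ := by
    rw [aux_kernelSubobject_cokernel, Subobject.mk_arrow]
  rw [preradCoprod]
  constructor
  · intro h
    have : kernelSubobject
        (cokernel.π σ.arrow ≫ Functor.whiskerLeft (cokernel σ.arrow) (cokernel.π σ.arrow)) =
        kernelSubobject (cokernel.π σ.arrow) := by rw [h, hσ]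
    have hmono := (aux_kernel_comp_eq_iff_mono _ _).1 this
    exact isIso_of_mono_of_epi _
  · intro h
    have hmono : Mono (Functor.whiskerLeft (cokernel σ.arrow) (cokernel.π σ.arrow)) :=
      inferInstance
    rw [(aux_kernel_comp_eq_iff_mono (cokernel.π σ.arrow)
      (Functor.whiskerLeft (cokernel σ.arrow) (cokernel.π σ.arrow))).2 hmono, hσ]
end

section
/- Let A be an abelian category, σ: H → 1_A a natural transformation, and τ := Im(σ) : T ↪ 1_A its image preradical. If the natural transformation Hτ : HT → H is an epimorphism in Fun(A,A), then τ is an idempotent preradical. -/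
open CategoryTheory CategoryTheory.Limits

universe v u

variable {A : Type u} [Category.{v} A] [Abelian A]

/-- The product `τ·σ` of preradicals, represented by `σ ∘ τS : TS ⟶ 1`. -/
noncomputable def preradProd (τ σ : Subobject (𝟭 A)) : Subobject (𝟭 A) :=
  imageSubobject
    ((Functor.whiskerLeft (σ : A ⥤ A) τ.arrow ≫ σ.arrow :
      (σ : A ⥤ A) ⋙ (τ : A ⥤ A) ⟶ 𝟭 A))

/-- In an abelian category, the image of `e ≫ m` with `e` epi and `m` mono is `mk m`. -/
theorem imageSubobject_epi_comp_mono {C : Type*} [Category C] [Abelian C]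
    {X Y Z : C} (e : X ⟶ Y) [Epi e] (m : Y ⟶ Z) [Mono m] :
    imageSubobject (e ≫ m) = Subobject.mk m := by
  refine le_antisymm ?_ ?_
  · exact imageSubobject_le _ (e ≫ (Subobject.underlyingIso m).inv) (by simp)
  · have sq : CommSq (factorThruImageSubobject (e ≫ m)) e
        (imageSubobject (e ≫ m)).arrow m := ⟨by simp⟩
    have hse : StrongEpi e := strongEpi_of_epi e
    rw [← Subobject.mk_arrow (imageSubobject (e ≫ m))]
    exact Subobject.mk_le_mk_of_comm sq.lift sq.fac_right

/-- If `σ : H ⟶ 1_A` is a natural transformation with image preradical `τ`,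
and `Hτ : HT ⟶ H` is an epimorphism, then `τ` is idempotent. -/
theorem prerad_image_idempotent_of_epi (H : A ⥤ A) (σ : H ⟶ 𝟭 A)
    (hepi : Epi (Functor.whiskerRight (imageSubobject σ).arrow H)) :
    preradProd (imageSubobject σ) (imageSubobject σ) = imageSubobject σ := by
  set τ := imageSubobject σ with hτ
  set T : A ⥤ A := (τ : A ⥤ A) with hT
  -- components of τ.arrow are monos
  have hmono : ∀ X : A, Mono (τ.arrow.app X) :=
    (NatTrans.mono_iff_mono_app τ.arrow).mp inferInstance
  -- the factorization of σ through its image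
  have hf : Epi (factorThruImageSubobject σ) := inferInstance
  have hfapp : ∀ X : A, Epi ((factorThruImageSubobject σ).app X) :=
    (NatTrans.epi_iff_epi_app _).mp hf
  have hHapp : ∀ X : A, Epi ((Functor.whiskerRight τ.arrow H).app X) :=
    (NatTrans.epi_iff_epi_app _).mp hepi
  -- each T.map (τ.arrow.app X) is epi
  have hTmap : ∀ X : A, Epi (T.map (τ.arrow.app X)) := by
    intro X
    have nat : H.map (τ.arrow.app X) ≫ (factorThruImageSubobject σ).app X =
        (factorThruImageSubobject σ).app (T.obj X) ≫ T.map (τ.arrow.app X) :=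
      (factorThruImageSubobject σ).naturality (τ.arrow.app X)
    have : Epi (H.map (τ.arrow.app X) ≫ (factorThruImageSubobject σ).app X) := by
      have h1 : Epi (H.map (τ.arrow.app X)) := hHapp X
      have h2 := hfapp X
      exact epi_comp _ _
    rw [nat] at this
    exact epi_of_epi ((factorThruImageSubobject σ).app (T.obj X)) _
  -- hence whiskerLeft T τ.arrow is epi
  have happ : ∀ X : A, τ.arrow.app (T.obj X) = T.map (τ.arrow.app X) := by
    intro X
    have := hmono X
    rw [← cancel_mono (τ.arrow.app X)]
    simp
    rfl
  haveI : ∀ X : A, Epi ((Functor.whiskerLeft T τ.arrow).app X) := by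
    intro X
    have h : (Functor.whiskerLeft T τ.arrow).app X = T.map (τ.arrow.app X) := happ X
    rw [h]
    exact hTmap X
  haveI hewhisk : Epi (Functor.whiskerLeft T τ.arrow) := NatTrans.epi_of_epi_app _
  -- conclude
  show imageSubobject (Functor.whiskerLeft T τ.arrow ≫ τ.arrow) = τ
  rw [imageSubobject_epi_comp_mono (Functor.whiskerLeft T τ.arrow) τ.arrow, Subobject.mk_arrow]
end
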